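/- Let $X$ be a Banach space and $f : [a,b] \to X$ differentiable with Bochner-integrable derivative. Then $\left\| \int_a^b f(t)\,dt - \frac{b-a}{3}\left[\frac{f(a)+f(b)}{2} + 2 f\left(\frac{a+b}{2}\right)\right] \right\| \le \frac{1}{3}(b-a)\int_a^b \|f'(t)\|\,dt$. -/

import Mathlib

open MeasureTheory intervalIntegral

private lemma smul_ii {X : Type*} [NormedAddCommGroup X] [NormedSpace ℝ X]
    {u v c : ℝ} {g : ℝ → X} (h : IntervalIntegrable g volume u v) :
    IntervalIntegrable (fun t => (t - c) • g t) volume u v := by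
  rw [intervalIntegrable_iff] at h ⊢
  have h' : IntegrableOn g (Set.uIcc u v) volume := by
    rw [Set.uIcc, integrableOn_Icc_iff_integrableOn_Ioc]
    exact h
  have := h'.continuousOn_smul (f := fun t : ℝ => t - c)
    ((continuous_id.sub continuous_const).continuousOn) isCompact_uIcc
  exact this.mono_set Set.Ioc_subset_Icc_self

private lemma ibp {X : Type*} [NormedAddCommGroup X] [NormedSpace ℝ X] [CompleteSpace X]
    {u v c : ℝ} {f f' : ℝ → X} (huv : u ≤ v)
    (hd : ∀ t ∈ Set.Icc u v, HasDerivAt f (f' t) t)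
    (hi : IntervalIntegrable f' volume u v)
    (hfc : IntervalIntegrable f volume u v) :
    (∫ t in u..v, f t) =
      (v - c) • f v - (u - c) • f u - ∫ t in u..v, (t - c) • f' t := by
  have hG : ∀ t ∈ Set.uIcc u v,
      HasDerivAt (fun s => (s - c) • f s) (f t + (t - c) • f' t) t := by
    intro t ht
    rw [Set.uIcc_of_le huv] at ht
    have := (((hasDerivAt_id t).sub_const c).smul (hd t ht))
    convert this using 1
    · rfl
    · simp [one_smul, add_comm]
  have hint2 : IntervalIntegrable (fun t => f t + (t - c) • f' t) volume u v :=
    hfc.add (smul_ii hi)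
  have := intervalIntegral.integral_eq_sub_of_hasDerivAt hG hint2
  rw [intervalIntegral.integral_add hfc (smul_ii hi)] at this
  have h2 : (∫ t in u..v, f t) =
      ((v - c) • f v - (u - c) • f u) - ∫ t in u..v, (t - c) • f' t := by
    rw [← this]; abel
  simpa using h2

theorem stmt19 {X : Type*} [NormedAddCommGroup X] [NormedSpace ℝ X] [CompleteSpace X]
    {a b : ℝ} (hab : a < b) {f f' : ℝ → X}
    (hderiv : ∀ t ∈ Set.Icc a b, HasDerivAt f (f' t) t)
    (hint : IntervalIntegrable f' volume a b) :
    ‖(∫ t in a..b, f t) - ((b - a) / 3) • ((2 : ℝ)⁻¹ • (f a + f b) + (2 : ℝ) • f ((a + b) / 2))‖ ≤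
      (1 / 3) * (b - a) * (∫ t in a..b, ‖f' t‖) := by
  set m : ℝ := (a + b) / 2 with hm
  have ham : a ≤ m := by simp only [hm]; linarith
  have hmb : m ≤ b := by simp only [hm]; linarith
  have hfc : ContinuousOn f (Set.Icc a b) := fun t ht =>
    (hderiv t ht).continuousAt.continuousWithinAt
  have hII1 : IntervalIntegrable f volume a m :=
    (hfc.mono (by rw [Set.uIcc_of_le ham]; exact Set.Icc_subset_Icc le_rfl hmb)).intervalIntegrable
  have hII2 : IntervalIntegrable f volume m b :=
    (hfc.mono (by rw [Set.uIcc_of_le hmb]; exact Set.Icc_subset_Icc ham le_rfl)).intervalIntegrable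
  have hi1 : IntervalIntegrable f' volume a m :=
    hint.mono_set (by rw [Set.uIcc_of_le ham, Set.uIcc_of_le hab.le]; exact Set.Icc_subset_Icc le_rfl hmb)
  have hi2 : IntervalIntegrable f' volume m b :=
    hint.mono_set (by rw [Set.uIcc_of_le hmb, Set.uIcc_of_le hab.le]; exact Set.Icc_subset_Icc ham le_rfl)
  set c₁ : ℝ := (5 * a + b) / 6 with hc1
  set c₂ : ℝ := (a + 5 * b) / 6 with hc2
  have e1 := ibp (c := c₁) ham
    (fun t ht => hderiv t (Set.Icc_subset_Icc le_rfl hmb ht)) hi1 hII1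
  have e2 := ibp (c := c₂) hmb
    (fun t ht => hderiv t (Set.Icc_subset_Icc ham le_rfl ht)) hi2 hII2
  have hsplit : (∫ t in a..b, f t) = (∫ t in a..m, f t) + ∫ t in m..b, f t :=
    (intervalIntegral.integral_add_adjacent_intervals hII1 hII2).symm
  set I₁ : X := ∫ t in a..m, (t - c₁) • f' t with hI1
  set I₂ : X := ∫ t in m..b, (t - c₂) • f' t with hI2
  have key : (∫ t in a..b, f t) -
      ((b - a) / 3) • ((2 : ℝ)⁻¹ • (f a + f b) + (2 : ℝ) • f m) = -(I₁ + I₂) := by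
    rw [hsplit, e1, e2]
    have hmc1 : m - c₁ = (b - a) / 3 := by rw [hm, hc1]; ring
    have hac1 : a - c₁ = -((b - a) / 6) := by rw [hc1]; ring
    have hbc2 : b - c₂ = (b - a) / 6 := by rw [hc2]; ring
    have hmc2 : m - c₂ = -((b - a) / 3) := by rw [hm, hc2]; ring
    rw [hmc1, hac1, hbc2, hmc2]
    module
  rw [key, norm_neg]
  have hb1 : ‖I₁‖ ≤ (b - a) / 3 * ∫ t in a..m, ‖f' t‖ := by
    calc ‖I₁‖ ≤ ∫ t in a..m, ‖(t - c₁) • f' t‖ :=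
          intervalIntegral.norm_integral_le_integral_norm ham
      _ ≤ ∫ t in a..m, (b - a) / 3 * ‖f' t‖ := by
          apply intervalIntegral.integral_mono_on ham ((smul_ii hi1).norm)
            (hi1.norm.const_mul _)
          intro t ht
          rw [norm_smul, Real.norm_eq_abs]
          apply mul_le_mul_of_nonneg_right _ (norm_nonneg _)
          rw [abs_le]
          constructor
          · have := ht.1; rw [hc1]; nlinarith [ht.2, hmb]
          · have := ht.2; rw [hc1, hm] at *; nlinarith [ht.1]
      _ = (b - a) / 3 * ∫ t in a..m, ‖f' t‖ := intervalIntegral.integral_const_mul _ _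
  have hb2 : ‖I₂‖ ≤ (b - a) / 3 * ∫ t in m..b, ‖f' t‖ := by
    calc ‖I₂‖ ≤ ∫ t in m..b, ‖(t - c₂) • f' t‖ :=
          intervalIntegral.norm_integral_le_integral_norm hmb
      _ ≤ ∫ t in m..b, (b - a) / 3 * ‖f' t‖ := by
          apply intervalIntegral.integral_mono_on hmb ((smul_ii hi2).norm)
            (hi2.norm.const_mul _)
          intro t ht
          rw [norm_smul, Real.norm_eq_abs]
          apply mul_le_mul_of_nonneg_right _ (norm_nonneg _)
          rw [abs_le]
          constructor
          · have := ht.1; rw [hc2, hm] at *; nlinarith [ht.2]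
          · have := ht.2; rw [hc2]; nlinarith [ht.1, ham]
      _ = (b - a) / 3 * ∫ t in m..b, ‖f' t‖ := intervalIntegral.integral_const_mul _ _
  have hsum : (∫ t in a..b, ‖f' t‖) = (∫ t in a..m, ‖f' t‖) + ∫ t in m..b, ‖f' t‖ :=
    (intervalIntegral.integral_add_adjacent_intervals hi1.norm hi2.norm).symm
  calc ‖I₁ + I₂‖ ≤ ‖I₁‖ + ‖I₂‖ := norm_add_le _ _
    _ ≤ (b - a) / 3 * (∫ t in a..m, ‖f' t‖) + (b - a) / 3 * ∫ t in m..b, ‖f' t‖ :=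
        add_le_add hb1 hb2
    _ = (1 / 3) * (b - a) * (∫ t in a..b, ‖f' t‖) := by rw [hsum]; ring
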